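/- Let f(x) = x^4 + a x^2 + b x + c be a real quartic with all roots real. Then all six roots of g(x) = x^6 + 8a x^4 + 16(a^2 - 4c) x^2 - 64 b^2 are real; namely the roots of g are exactly 2(xi + xj) over the six unordered pairs {i,j} of indices of roots of f. -/
import Mathlib

/-- If `f(x) = x^4 + a x^2 + b x + c` has four real roots `x 0, ..., x 3`, then the
real roots of `g(x) = x^6 + 8 a x^4 + 16 (a^2 - 4 c) x^2 - 64 b^2` are exactly the
numbers `2 (x i + x j)` over unordered pairs `{i, j}` of distinct indices; in
particular all six roots of `g` are real. -/
theorem stmt_1 (a b c : ℝ) (x : Fin 4 → ℝ)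
    (hf : ∀ t : ℝ, t ^ 4 + a * t ^ 2 + b * t + c = ∏ k : Fin 4, (t - x k)) :
    (∀ t : ℝ, t ^ 6 + 8 * a * t ^ 4 + 16 * (a ^ 2 - 4 * c) * t ^ 2 - 64 * b ^ 2
        = ∏ p ∈ Finset.univ.filter (fun p : Fin 4 × Fin 4 => p.1 < p.2),
            (t - 2 * (x p.1 + x p.2))) ∧
    {t : ℝ | t ^ 6 + 8 * a * t ^ 4 + 16 * (a ^ 2 - 4 * c) * t ^ 2 - 64 * b ^ 2 = 0}
      = {t : ℝ | ∃ i j : Fin 4, i < j ∧ t = 2 * (x i + x j)} := by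
  have hf' : ∀ t : ℝ, t ^ 4 + a * t ^ 2 + b * t + c
      = (t - x 0) * (t - x 1) * (t - x 2) * (t - x 3) := by
    intro t; rw [hf, Fin.prod_univ_four]
  have he1 : x 0 + x 1 + x 2 + x 3 = 0 := by
    linear_combination (hf' 2 - hf' (-2) - 2 * (hf' 1 - hf' (-1))) / 12
  have hb : b = -(x 0 * x 1 * x 2 + x 0 * x 1 * x 3 + x 0 * x 2 * x 3 + x 1 * x 2 * x 3) := by
    linear_combination (8 * (hf' 1 - hf' (-1)) - (hf' 2 - hf' (-2))) / 12
  have hc : c = x 0 * x 1 * x 2 * x 3 := by linear_combination hf' 0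
  have ha : a = x 0 * x 1 + x 0 * x 2 + x 0 * x 3 + x 1 * x 2 + x 1 * x 3 + x 2 * x 3 := by
    linear_combination (hf' 1 + hf' (-1)) / 2 - hf' 0
  have hx3 : x 3 = -(x 0 + x 1 + x 2) := by linarith
  have hS : Finset.univ.filter (fun p : Fin 4 × Fin 4 => p.1 < p.2)
      = ({(0,1),(0,2),(0,3),(1,2),(1,3),(2,3)} : Finset (Fin 4 × Fin 4)) := by decide
  have key : ∀ t : ℝ, t ^ 6 + 8 * a * t ^ 4 + 16 * (a ^ 2 - 4 * c) * t ^ 2 - 64 * b ^ 2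
      = ∏ p ∈ Finset.univ.filter (fun p : Fin 4 × Fin 4 => p.1 < p.2),
          (t - 2 * (x p.1 + x p.2)) := by
    intro t
    rw [hS, Finset.prod_insert (by decide), Finset.prod_insert (by decide),
      Finset.prod_insert (by decide), Finset.prod_insert (by decide),
      Finset.prod_insert (by decide), Finset.prod_singleton]
    subst ha hb hc
    rw [hx3]
    ring
  refine ⟨key, ?_⟩
  ext t
  simp only [Set.mem_setOf_eq, key t, Finset.prod_eq_zero_iff]
  constructor
  · rintro ⟨⟨i, j⟩, hmem, hz⟩
    simp only [Finset.mem_filter] at hmem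
    exact ⟨i, j, hmem.2, by linarith [sub_eq_zero.mp hz]⟩
  · rintro ⟨i, j, hij, rfl⟩
    exact ⟨(i, j), by simp [hij], by ring⟩
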